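/- arXiv:2205.05913 — 5 statements merged into one kernel-verified Lean document; each statement's English description precedes it below -/
import Mathlib

section
/- Assume the map p' ↦ δ₁(p', s) is differentiable at p, g is differentiable at (p*, s), the preconditioning identity g(p' + δ₁(p', s), s) = 0 holds for all p' in a neighborhood of p, and ∂_p g(p*, s) is a bijective continuous linear map. Then the partial Fréchet derivative of δ₁ with respect to the pressure variable satisfies ∂_p δ₁(p, s) = -id_E. -/
/-- In the field-split preconditioning setting, if `p' ↦ δ₁(p', s)` is
differentiable at `p`, `g` is differentiable at `(p*, s)` with `p* := p + δ₁(p, s)`,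
the preconditioning identity `g(p' + δ₁(p', s), s) = 0` holds for all `p'` near `p`, and
`∂_p g(p*, s)` is a bijective continuous linear map, then `∂_p δ₁(p, s) = -id`. -/
theorem fsmsn_ddelta1_dp {E : Type*} [NormedAddCommGroup E] [NormedSpace ℝ E]
    [FiniteDimensional ℝ E]
    (g δ₁ : E × E → E) (p s : E)
    (hδ₁ : DifferentiableAt ℝ (fun p' => δ₁ (p', s)) p)
    (hg : DifferentiableAt ℝ g (p + δ₁ (p, s), s))
    (hid : ∀ᶠ p' in nhds p, g (p' + δ₁ (p', s), s) = 0)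
    (hbij : Function.Bijective ⇑(fderiv ℝ (fun x => g (x, s)) (p + δ₁ (p, s)))) :
    fderiv ℝ (fun p' => δ₁ (p', s)) p = -ContinuousLinearMap.id ℝ E := by
  set D := fderiv ℝ (fun p' => δ₁ (p', s)) p with hD
  have hgs : DifferentiableAt ℝ (fun x => g (x, s)) (p + δ₁ (p, s)) := by
    have h1 : DifferentiableAt ℝ (fun x : E => (x, s)) (p + δ₁ (p, s)) :=
      (differentiableAt_id.prodMk (differentiableAt_const s))
    exact DifferentiableAt.comp (p + δ₁ (p, s)) hg h1
  set A := fderiv ℝ (fun x => g (x, s)) (p + δ₁ (p, s)) with hA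
  have hsum : HasFDerivAt (fun p' => p' + δ₁ (p', s))
      (ContinuousLinearMap.id ℝ E + D) p :=
    (hasFDerivAt_id p).add hδ₁.hasFDerivAt
  have hAs : HasFDerivAt (fun x => g (x, s)) A (p + δ₁ (p, s)) := hgs.hasFDerivAt
  have hcomp : HasFDerivAt (fun p' => g (p' + δ₁ (p', s), s))
      (A.comp (ContinuousLinearMap.id ℝ E + D)) p := by have := hAs.comp p hsum; exact this
  have hzero : HasFDerivAt (fun p' : E => g (p' + δ₁ (p', s), s)) 0 p :=
    (hasFDerivAt_const (𝕜 := ℝ) (0 : E) p).congr_of_eventuallyEq (hid.mono fun x hx => hx)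
  have heq : A.comp (ContinuousLinearMap.id ℝ E + D) = 0 := hcomp.unique hzero
  ext v
  have h2 : A ((ContinuousLinearMap.id ℝ E + D) v) = A 0 := by
    rw [map_zero]
    exact congrArg (fun (T : E →L[ℝ] E) => T v) heq
  have h1 : (ContinuousLinearMap.id ℝ E + D) v = 0 := hbij.injective h2
  simp only [ContinuousLinearMap.add_apply, ContinuousLinearMap.id_apply] at h1
  simp only [ContinuousLinearMap.neg_apply, ContinuousLinearMap.id_apply]
  exact eq_neg_of_add_eq_zero_right h1
end

section
/- Assume the maps p' ↦ δ₁(p', s) and p' ↦ δ₂(p', s) are differentiable at p, that g is differentiable at (p*, s) with ∂_p g(p*, s) a bijective continuous linear map, that h is differentiable at (p*, s*) with ∂_s h(p*, s*) a bijective continuous linear map, and that the preconditioning identities g(p' + δ₁(p', s), s) = 0 and h(p' + δ₁(p', s), s + δ₂(p', s)) = 0 hold for all p' in a neighborhood of p. Then the partial Fréchet derivative of δ₂ with respect to the pressure variable vanishes: ∂_p δ₂(p, s) = 0. -/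
/-- In the field-split preconditioning setting, if `p' ↦ δ₁(p', s)` and
`p' ↦ δ₂(p', s)` are differentiable at `p`, `g` is differentiable at `(p*, s)` with
`∂_p g(p*, s)` bijective, `h` is differentiable at `(p*, s*)` with `∂_s h(p*, s*)` bijective
(where `p* := p + δ₁(p, s)`, `s* := s + δ₂(p, s)`), and the preconditioning identities
`g(p' + δ₁(p', s), s) = 0` and `h(p' + δ₁(p', s), s + δ₂(p', s)) = 0` hold for all `p'`
near `p`, then `∂_p δ₂(p, s) = 0`. -/
theorem fsmsn_ddelta2_dp {E : Type*} [NormedAddCommGroup E] [NormedSpace ℝ E]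
    [FiniteDimensional ℝ E]
    (g h δ₁ δ₂ : E × E → E) (p s : E)
    (hδ₁ : DifferentiableAt ℝ (fun p' => δ₁ (p', s)) p)
    (hδ₂ : DifferentiableAt ℝ (fun p' => δ₂ (p', s)) p)
    (hg : DifferentiableAt ℝ g (p + δ₁ (p, s), s))
    (hgbij : Function.Bijective ⇑(fderiv ℝ (fun x => g (x, s)) (p + δ₁ (p, s))))
    (hh : DifferentiableAt ℝ h (p + δ₁ (p, s), s + δ₂ (p, s)))
    (hhbij : Function.Bijective
      ⇑(fderiv ℝ (fun y => h (p + δ₁ (p, s), y)) (s + δ₂ (p, s))))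
    (hidg : ∀ᶠ p' in nhds p, g (p' + δ₁ (p', s), s) = 0)
    (hidh : ∀ᶠ p' in nhds p, h (p' + δ₁ (p', s), s + δ₂ (p', s)) = 0) :
    fderiv ℝ (fun p' => δ₂ (p', s)) p = 0 := by
  set D₁ := fderiv ℝ (fun p' => δ₁ (p', s)) p with hD₁
  set D₂ := fderiv ℝ (fun p' => δ₂ (p', s)) p with hD₂
  set U : E →L[ℝ] E := ContinuousLinearMap.id ℝ E + D₁ with hUdef
  have hU : HasFDerivAt (fun p' => p' + δ₁ (p', s)) U p :=
    (hasFDerivAt_id p).add hδ₁.hasFDerivAt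
  have hDg := hg.hasFDerivAt
  have hDh := hh.hasFDerivAt
  -- partial derivative of g w.r.t. first variable
  have hgx : HasFDerivAt (fun x => g (x, s))
      ((fderiv ℝ g (p + δ₁ (p, s), s)).comp (ContinuousLinearMap.inl ℝ E E))
      (p + δ₁ (p, s)) :=
    hDg.comp (p + δ₁ (p, s))
      ((hasFDerivAt_id (p + δ₁ (p, s))).prodMk (hasFDerivAt_const s (p + δ₁ (p, s))))
  have hA := hgx.fderiv
  -- partial derivative of h w.r.t. second variable
  have hhy : HasFDerivAt (fun y => h (p + δ₁ (p, s), y))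
      ((fderiv ℝ h (p + δ₁ (p, s), s + δ₂ (p, s))).comp (ContinuousLinearMap.inr ℝ E E))
      (s + δ₂ (p, s)) :=
    hDh.comp (s + δ₂ (p, s))
      ((hasFDerivAt_const (p + δ₁ (p, s)) (s + δ₂ (p, s))).prodMk
        (hasFDerivAt_id (s + δ₂ (p, s))))
  have hB := hhy.fderiv
  -- composite with g is eventually 0
  have hcompg : HasFDerivAt (fun p' => g (p' + δ₁ (p', s), s))
      ((fderiv ℝ g (p + δ₁ (p, s), s)).comp (U.prod 0)) p :=
    hDg.comp p (hU.prodMk (hasFDerivAt_const s p))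
  have hzg : (fderiv ℝ g (p + δ₁ (p, s), s)).comp (U.prod 0) = 0 := by
    rw [← hcompg.fderiv]
    have : fderiv ℝ (fun p' => g (p' + δ₁ (p', s), s)) p
        = fderiv ℝ (fun _ : E => (0 : E)) p :=
      Filter.EventuallyEq.fderiv_eq hidg
    rw [this, fderiv_fun_const]
    rfl
  -- hence U = 0 by injectivity of ∂ₚ g
  have hUzero : ∀ v, U v = 0 := by
    intro v
    apply hgbij.injective
    rw [hA]
    have h1 : (fderiv ℝ g (p + δ₁ (p, s), s)).comp (ContinuousLinearMap.inl ℝ E E) (U v)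
        = (fderiv ℝ g (p + δ₁ (p, s), s)) (U v, 0) := rfl
    have h2 : (fderiv ℝ g (p + δ₁ (p, s), s)).comp (ContinuousLinearMap.inl ℝ E E) 0
        = (fderiv ℝ g (p + δ₁ (p, s), s)) (0, 0) := by simp
    rw [h1, h2]
    have := congrFun (congrArg (fun (T : E →L[ℝ] E) => (T : E → E)) hzg) v
    simp at this; rw [this]; exact (map_zero _).symm
  -- composite with h is eventually 0
  have hcomph : HasFDerivAt (fun p' => h (p' + δ₁ (p', s), s + δ₂ (p', s)))
      ((fderiv ℝ h (p + δ₁ (p, s), s + δ₂ (p, s))).comp (U.prod D₂)) p := by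
    have hpair : HasFDerivAt (fun p' => (p' + δ₁ (p', s), s + δ₂ (p', s))) (U.prod D₂) p :=
      hU.prodMk (by simpa using (hasFDerivAt_const s p).fun_add hδ₂.hasFDerivAt)
    exact hDh.comp p hpair
  have hzh : (fderiv ℝ h (p + δ₁ (p, s), s + δ₂ (p, s))).comp (U.prod D₂) = 0 := by
    rw [← hcomph.fderiv]
    have : fderiv ℝ (fun p' => h (p' + δ₁ (p', s), s + δ₂ (p', s))) p
        = fderiv ℝ (fun _ : E => (0 : E)) p :=
      Filter.EventuallyEq.fderiv_eq hidh
    rw [this, fderiv_fun_const]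
    rfl
  -- conclude D₂ = 0
  ext v
  apply hhbij.injective
  rw [hB]
  have h1 : (fderiv ℝ h (p + δ₁ (p, s), s + δ₂ (p, s))).comp (ContinuousLinearMap.inr ℝ E E)
      (D₂ v) = (fderiv ℝ h (p + δ₁ (p, s), s + δ₂ (p, s))) (0, D₂ v) := rfl
  have h2 : (fderiv ℝ h (p + δ₁ (p, s), s + δ₂ (p, s))).comp (ContinuousLinearMap.inr ℝ E E)
      ((0 : E →L[ℝ] E) v) = (fderiv ℝ h (p + δ₁ (p, s), s + δ₂ (p, s))) (0, 0) := by simp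
  have := congrFun (congrArg (fun (T : E →L[ℝ] E) => (T : E → E)) hzh) v
  simp only [ContinuousLinearMap.comp_apply, ContinuousLinearMap.prod_apply,
    ContinuousLinearMap.zero_apply, hUzero v] at this
  rw [h1, h2]
  rw [this]; exact (map_zero _).symm
end

section
/- Assume the maps s' ↦ δ₁(p, s') and s' ↦ δ₂(p, s') are differentiable at s, that g is differentiable at (p*, s) with A := ∂_p g(p*, s) a bijective continuous linear map, that h is differentiable at (p*, s*) with C := ∂_s h(p*, s*) a bijective continuous linear map, and that the preconditioning identities g(p + δ₁(p, s'), s') = 0 and h(p + δ₁(p, s'), s' + δ₂(p, s')) = 0 hold for all s' in a neighborhood of s. Then the partial Fréchet derivative of δ₂ with respect to the saturation variable satisfies ∂_s δ₂(p, s) = -id_E + C⁻¹ ∘ ∂_p h(p*, s*) ∘ A⁻¹ ∘ ∂_s g(p*, s). -/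
/-- In the field-split preconditioning setting, if `s' ↦ δ₁(p, s')` and
`s' ↦ δ₂(p, s')` are differentiable at `s`, `g` is differentiable at `(p*, s)` with
`A := ∂_p g(p*, s)` bijective, `h` is differentiable at `(p*, s*)` with
`C := ∂_s h(p*, s*)` bijective (where `p* := p + δ₁(p, s)`, `s* := s + δ₂(p, s)`), and the
preconditioning identities `g(p + δ₁(p, s'), s') = 0` and
`h(p + δ₁(p, s'), s' + δ₂(p, s')) = 0` hold for all `s'` near `s`, then
`∂_s δ₂(p, s) = -id + C⁻¹ ∘ ∂_p h(p*, s*) ∘ A⁻¹ ∘ ∂_s g(p*, s)`. -/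
theorem fsmsn_ddelta2_ds {E : Type*} [NormedAddCommGroup E] [NormedSpace ℝ E]
    [FiniteDimensional ℝ E]
    (g h δ₁ δ₂ : E × E → E) (p s : E)
    (pstar sstar : E)
    (hpstar : pstar = p + δ₁ (p, s)) (hsstar : sstar = s + δ₂ (p, s))
    (hδ₁ : DifferentiableAt ℝ (fun s' => δ₁ (p, s')) s)
    (hδ₂ : DifferentiableAt ℝ (fun s' => δ₂ (p, s')) s)
    (hg : DifferentiableAt ℝ g (pstar, s))
    (hh : DifferentiableAt ℝ h (pstar, sstar))
    (A : E ≃L[ℝ] E) (hA : (A : E →L[ℝ] E) = fderiv ℝ (fun x => g (x, s)) pstar)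
    (C : E ≃L[ℝ] E) (hC : (C : E →L[ℝ] E) = fderiv ℝ (fun y => h (pstar, y)) sstar)
    (hidg : ∀ᶠ s' in nhds s, g (p + δ₁ (p, s'), s') = 0)
    (hidh : ∀ᶠ s' in nhds s, h (p + δ₁ (p, s'), s' + δ₂ (p, s')) = 0) :
    fderiv ℝ (fun s' => δ₂ (p, s')) s
      = -ContinuousLinearMap.id ℝ E
        + (C.symm : E →L[ℝ] E).comp
            ((fderiv ℝ (fun x => h (x, sstar)) pstar).comp
              ((A.symm : E →L[ℝ] E).comp (fderiv ℝ (fun y => g (pstar, y)) s))) := by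
  set D1 := fderiv ℝ (fun s' => δ₁ (p, s')) s with hD1
  set D2 := fderiv ℝ (fun s' => δ₂ (p, s')) s with hD2
  set G := fderiv ℝ g (pstar, s) with hG
  set H := fderiv ℝ h (pstar, sstar) with hH
  -- partial derivatives
  have hgp : fderiv ℝ (fun x => g (x, s)) pstar
      = G.comp (ContinuousLinearMap.inl ℝ E E) :=
    (hg.hasFDerivAt.comp pstar (hasFDerivAt_prodMk_left pstar s)).fderiv
  have hgs : fderiv ℝ (fun y => g (pstar, y)) s
      = G.comp (ContinuousLinearMap.inr ℝ E E) :=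
    (hg.hasFDerivAt.comp s (hasFDerivAt_prodMk_right pstar s)).fderiv
  have hhp : fderiv ℝ (fun x => h (x, sstar)) pstar
      = H.comp (ContinuousLinearMap.inl ℝ E E) :=
    (hh.hasFDerivAt.comp pstar (hasFDerivAt_prodMk_left pstar sstar)).fderiv
  have hhs : fderiv ℝ (fun y => h (pstar, y)) sstar
      = H.comp (ContinuousLinearMap.inr ℝ E E) :=
    (hh.hasFDerivAt.comp sstar (hasFDerivAt_prodMk_right pstar sstar)).fderiv
  -- first identity differentiated
  have hpair1 : HasFDerivAt (fun s' => (p + δ₁ (p, s'), s'))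
      (D1.prod (ContinuousLinearMap.id ℝ E)) s := by
    have := HasFDerivAt.prodMk ((hasFDerivAt_const p s).add hδ₁.hasFDerivAt) (hasFDerivAt_id s)
    simpa using this
  have hgd : HasFDerivAt g G (p + δ₁ (p, s), s) := by rw [← hpstar]; exact hg.hasFDerivAt
  have hcompg : HasFDerivAt (fun s' => g (p + δ₁ (p, s'), s'))
      (G.comp (D1.prod (ContinuousLinearMap.id ℝ E))) s := by
    exact HasFDerivAt.comp (f := fun s' => (p + δ₁ (p, s'), s')) s hgd hpair1
  have hzg : G.comp (D1.prod (ContinuousLinearMap.id ℝ E)) = 0 :=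
    hcompg.unique ((hasFDerivAt_const (0 : E) s).congr_of_eventuallyEq
      (hidg.mono fun x hx => hx))
  -- second identity differentiated
  have hpair2 : HasFDerivAt (fun s' => (p + δ₁ (p, s'), s' + δ₂ (p, s')))
      (D1.prod (ContinuousLinearMap.id ℝ E + D2)) s := by
    have := HasFDerivAt.prodMk (((hasFDerivAt_const p s).add hδ₁.hasFDerivAt))
      ((hasFDerivAt_id s).add hδ₂.hasFDerivAt)
    simpa using this
  have hhd : HasFDerivAt h H (p + δ₁ (p, s), s + δ₂ (p, s)) := by
    rw [← hpstar, ← hsstar]; exact hh.hasFDerivAt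
  have hcomph : HasFDerivAt (fun s' => h (p + δ₁ (p, s'), s' + δ₂ (p, s')))
      (H.comp (D1.prod (ContinuousLinearMap.id ℝ E + D2))) s := by
    exact HasFDerivAt.comp (f := fun s' => (p + δ₁ (p, s'), s' + δ₂ (p, s'))) s hhd hpair2
  have hzh : H.comp (D1.prod (ContinuousLinearMap.id ℝ E + D2)) = 0 :=
    hcomph.unique ((hasFDerivAt_const (0 : E) s).congr_of_eventuallyEq
      (hidh.mono fun x hx => hx))
  -- pointwise consequences
  ext v
  have eg : A (D1 v) + G (0, v) = 0 := by
    have := congrArg (fun (T : E →L[ℝ] E) => T v) hzg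
    simp only [ContinuousLinearMap.comp_apply, ContinuousLinearMap.prod_apply,
      ContinuousLinearMap.id_apply, ContinuousLinearMap.zero_apply] at this
    have hsplit : G (D1 v, v) = G (D1 v, 0) + G (0, v) := by
      rw [← map_add]; norm_num
    have hAv : A (D1 v) = G (D1 v, 0) := by
      have := congrArg (fun (T : E →L[ℝ] E) => T (D1 v)) (hA.trans hgp)
      simpa using this
    rw [hAv, ← hsplit, this]
  have eh : H (D1 v, 0) + C (v + D2 v) = 0 := by
    have := congrArg (fun (T : E →L[ℝ] E) => T v) hzh
    simp only [ContinuousLinearMap.comp_apply, ContinuousLinearMap.prod_apply,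
      ContinuousLinearMap.add_apply, ContinuousLinearMap.id_apply,
      ContinuousLinearMap.zero_apply] at this
    have hCv : C (v + D2 v) = H (0, v + D2 v) := by
      have := congrArg (fun (T : E →L[ℝ] E) => T (v + D2 v)) (hC.trans hhs)
      simpa using this
    have hsplit : H (D1 v, v + D2 v) = H (D1 v, 0) + H (0, v + D2 v) := by
      rw [← map_add]; norm_num
    rw [hCv, ← hsplit, this]
  have hD1v : D1 v = A.symm (-(G (0, v))) := by
    have : A (D1 v) = -(G (0, v)) := by linear_combination (norm := abel) eg
    rw [← this, ContinuousLinearEquiv.symm_apply_apply]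
  have hfinal : v + D2 v = C.symm (-(H (D1 v, 0))) := by
    have : C (v + D2 v) = -(H (D1 v, 0)) := by linear_combination (norm := abel) eh
    rw [← this, ContinuousLinearEquiv.symm_apply_apply]
  simp only [ContinuousLinearMap.add_apply, ContinuousLinearMap.comp_apply,
    ContinuousLinearMap.neg_apply, ContinuousLinearMap.id_apply, hhp, hgs,
    ContinuousLinearMap.inl_apply, ContinuousLinearMap.inr_apply,
    ContinuousLinearMap.coe_coe]
  have : D2 v = -v + C.symm (-(H (D1 v, 0))) := by
    rw [← hfinal]; abel
  rw [this, hD1v]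
  congr 1
  rw [show ((A.symm (-G (0, v)), (0:E)) : E × E) = -((A.symm (G (0, v)), 0) : E × E) by
    simp [Prod.ext_iff]]
  simp only [map_neg, neg_neg]
  rfl
end

section
/- Let F := (δ₁, δ₂) : E × E → E × E be the preconditioned residual map and assume F is differentiable at (p, s), g is differentiable at (p*, s), h is differentiable at (p*, s*), and the preconditioning identities hold in a neighborhood of (p, s). Then the derivative DF(p, s) satisfies the block identity L ∘ DF(p, s) = -M, that is: for every (dp, ds) ∈ E × E, writing (d₁, d₂) := DF(p, s)(dp, ds), one has ∂_p g(p*, s)(d₁) = -(∂_p g(p*, s)(dp) + ∂_s g(p*, s)(ds)) and ∂_p h(p*, s*)(d₁) + ∂_s h(p*, s*)(d₂) = -(∂_p h(p*, s*)(dp) + ∂_s h(p*, s*)(ds)), where L is the block lower-triangular operator L(a, b) := (∂_p g(p*, s)(a), ∂_p h(p*, s*)(a) + ∂_s h(p*, s*)(b)) and M is the full block operator M(a, b) := (∂_p g(p*, s)(a) + ∂_s g(p*, s)(b), ∂_p h(p*, s*)(a) + ∂_s h(p*, s*)(b)). -/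
/-- Let `F := (δ₁, δ₂)` be the preconditioned residual map, differentiable
at `(p, s)`; let `g` be differentiable at `(p*, s)` and `h` at `(p*, s*)` (where
`p* := p + δ₁(p, s)`, `s* := s + δ₂(p, s)`), and suppose the preconditioning identities
hold in a neighborhood of `(p, s)`. Then `L ∘ DF(p, s) = -M`: for every `(dp, ds)`, writing
`(d₁, d₂) := DF(p, s)(dp, ds)`, one has
`∂_p g(p*, s)(d₁) = -(∂_p g(p*, s)(dp) + ∂_s g(p*, s)(ds))` and
`∂_p h(p*, s*)(d₁) + ∂_s h(p*, s*)(d₂) = -(∂_p h(p*, s*)(dp) + ∂_s h(p*, s*)(ds))`. -/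
theorem mspin_jacobian_block_identity {E : Type*} [NormedAddCommGroup E] [NormedSpace ℝ E]
    [FiniteDimensional ℝ E]
    (g h δ₁ δ₂ : E × E → E) (p s : E)
    (pstar sstar : E)
    (hpstar : pstar = p + δ₁ (p, s)) (hsstar : sstar = s + δ₂ (p, s))
    (F : E × E → E × E) (hF : ∀ x, F x = (δ₁ x, δ₂ x))
    (hFdiff : DifferentiableAt ℝ F (p, s))
    (hg : DifferentiableAt ℝ g (pstar, s))
    (hh : DifferentiableAt ℝ h (pstar, sstar))
    (hidg : ∀ᶠ x in nhds (p, s), g (x.1 + δ₁ x, x.2) = 0)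
    (hidh : ∀ᶠ x in nhds (p, s), h (x.1 + δ₁ x, x.2 + δ₂ x) = 0) :
    ∀ dp ds : E,
      fderiv ℝ (fun x => g (x, s)) pstar ((fderiv ℝ F (p, s) (dp, ds)).1)
        = -(fderiv ℝ (fun x => g (x, s)) pstar dp
            + fderiv ℝ (fun y => g (pstar, y)) s ds)
      ∧ fderiv ℝ (fun x => h (x, sstar)) pstar ((fderiv ℝ F (p, s) (dp, ds)).1)
          + fderiv ℝ (fun y => h (pstar, y)) sstar ((fderiv ℝ F (p, s) (dp, ds)).2)
        = -(fderiv ℝ (fun x => h (x, sstar)) pstar dp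
            + fderiv ℝ (fun y => h (pstar, y)) sstar ds) := by
  intro dp ds
  have hδ1 : δ₁ = fun x => (F x).1 := by funext x; rw [hF]
  have hδ2 : δ₂ = fun x => (F x).2 := by funext x; rw [hF]
  set DF := fderiv ℝ F (p, s) with hDF
  have hFd : HasFDerivAt F DF (p, s) := hFdiff.hasFDerivAt
  set Dg := fderiv ℝ g (pstar, s) with hDg
  set Dh := fderiv ℝ h (pstar, sstar) with hDh
  have hgd : HasFDerivAt g Dg (pstar, s) := hg.hasFDerivAt
  have hhd : HasFDerivAt h Dh (pstar, sstar) := hh.hasFDerivAt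
  -- derivatives of the composite maps
  have hA : HasFDerivAt (fun x : E × E => x.1 + (F x).1)
      (ContinuousLinearMap.fst ℝ E E + (ContinuousLinearMap.fst ℝ E E).comp DF) (p, s) :=
    (hasFDerivAt_fst).add hFd.fst
  have hB : HasFDerivAt (fun x : E × E => x.2 + (F x).2)
      (ContinuousLinearMap.snd ℝ E E + (ContinuousLinearMap.snd ℝ E E).comp DF) (p, s) :=
    (hasFDerivAt_snd).add hFd.snd
  have hφ1 : HasFDerivAt (fun x : E × E => (x.1 + (F x).1, x.2))
      ((ContinuousLinearMap.fst ℝ E E + (ContinuousLinearMap.fst ℝ E E).comp DF).prod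
        (ContinuousLinearMap.snd ℝ E E)) (p, s) := HasFDerivAt.prodMk hA hasFDerivAt_snd
  have hφ2 : HasFDerivAt (fun x : E × E => (x.1 + (F x).1, x.2 + (F x).2))
      ((ContinuousLinearMap.fst ℝ E E + (ContinuousLinearMap.fst ℝ E E).comp DF).prod
        (ContinuousLinearMap.snd ℝ E E + (ContinuousLinearMap.snd ℝ E E).comp DF)) (p, s) :=
    HasFDerivAt.prodMk hA hB
  have hval1 : (fun x : E × E => (x.1 + (F x).1, x.2)) (p, s) = (pstar, s) := by
    simp [hF, hpstar]
  have hval2 : (fun x : E × E => (x.1 + (F x).1, x.2 + (F x).2)) (p, s) = (pstar, sstar) := by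
    simp [hF, hpstar, hsstar]
  have hcomp1 : HasFDerivAt (fun x : E × E => g (x.1 + (F x).1, x.2))
      (Dg.comp ((ContinuousLinearMap.fst ℝ E E + (ContinuousLinearMap.fst ℝ E E).comp DF).prod
        (ContinuousLinearMap.snd ℝ E E))) (p, s) := by
    exact (hval1 ▸ hgd).comp (p, s) hφ1
  have hcomp2 : HasFDerivAt (fun x : E × E => h (x.1 + (F x).1, x.2 + (F x).2))
      (Dh.comp ((ContinuousLinearMap.fst ℝ E E + (ContinuousLinearMap.fst ℝ E E).comp DF).prod
        (ContinuousLinearMap.snd ℝ E E + (ContinuousLinearMap.snd ℝ E E).comp DF))) (p, s) := by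
    exact (hval2 ▸ hhd).comp (p, s) hφ2
  -- the composites vanish near (p, s)
  have hz1 : HasFDerivAt (fun x : E × E => g (x.1 + (F x).1, x.2)) (0 : E × E →L[ℝ] E) (p, s) := by
    have : (fun _ : E × E => (0 : E)) =ᶠ[nhds (p, s)] fun x : E × E => g (x.1 + (F x).1, x.2) := by
      filter_upwards [hidg] with x hx
      rw [hF]; exact hx.symm
    exact (hasFDerivAt_const (0 : E) (p, s)).congr_of_eventuallyEq this.symm
  have hz2 : HasFDerivAt (fun x : E × E => h (x.1 + (F x).1, x.2 + (F x).2))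
      (0 : E × E →L[ℝ] E) (p, s) := by
    have : (fun _ : E × E => (0 : E)) =ᶠ[nhds (p, s)]
        fun x : E × E => h (x.1 + (F x).1, x.2 + (F x).2) := by
      filter_upwards [hidh] with x hx
      rw [hF]; exact hx.symm
    exact (hasFDerivAt_const (0 : E) (p, s)).congr_of_eventuallyEq this.symm
  have key1 : ∀ v : E × E, Dg (v.1 + (DF v).1, v.2) = 0 := by
    intro v
    have := hcomp1.unique hz1
    have := congrFun (congrArg DFunLike.coe this) v
    simpa using this
  have key2 : ∀ v : E × E, Dh (v.1 + (DF v).1, v.2 + (DF v).2) = 0 := by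
    intro v
    have := hcomp2.unique hz2
    have := congrFun (congrArg DFunLike.coe this) v
    simpa using this
  -- partial derivatives in terms of total derivatives
  have hpg : fderiv ℝ (fun x => g (x, s)) pstar
      = Dg.comp (ContinuousLinearMap.inl ℝ E E) :=
    (hgd.comp pstar (hasFDerivAt_prodMk_left pstar s)).fderiv
  have hsg : fderiv ℝ (fun y => g (pstar, y)) s
      = Dg.comp (ContinuousLinearMap.inr ℝ E E) :=
    (hgd.comp s (hasFDerivAt_prodMk_right pstar s)).fderiv
  have hph : fderiv ℝ (fun x => h (x, sstar)) pstar
      = Dh.comp (ContinuousLinearMap.inl ℝ E E) :=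
    (hhd.comp pstar (hasFDerivAt_prodMk_left pstar sstar)).fderiv
  have hsh : fderiv ℝ (fun y => h (pstar, y)) sstar
      = Dh.comp (ContinuousLinearMap.inr ℝ E E) :=
    (hhd.comp sstar (hasFDerivAt_prodMk_right pstar sstar)).fderiv
  set d₁ := (DF (dp, ds)).1
  set d₂ := (DF (dp, ds)).2
  have hg0 : Dg (dp + d₁, ds) = 0 := key1 (dp, ds)
  have hh0 : Dh (dp + d₁, ds + d₂) = 0 := key2 (dp, ds)
  constructor
  · rw [hpg, hsg]
    simp only [ContinuousLinearMap.comp_apply, ContinuousLinearMap.inl_apply,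
      ContinuousLinearMap.inr_apply]
    have e1 : ((dp + d₁ : E), ds) = ((d₁, (0 : E)) : E × E) + ((dp, (0:E)) : E × E)
        + (((0:E), ds) : E × E) := by
      simp [Prod.ext_iff, add_comm]
    rw [e1, map_add, map_add, add_assoc] at hg0
    exact eq_neg_of_add_eq_zero_left hg0
  · rw [hph, hsh]
    simp only [ContinuousLinearMap.comp_apply, ContinuousLinearMap.inl_apply,
      ContinuousLinearMap.inr_apply]
    have e2 : ((dp + d₁ : E), ds + d₂) = ((d₁, (0:E)) : E × E) + (((0:E), d₂) : E × E)
        + ((dp, (0:E)) : E × E) + (((0:E), ds) : E × E) := by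
      simp [Prod.ext_iff, add_comm]
    rw [e2, map_add, map_add, map_add, add_assoc] at hh0
    exact eq_neg_of_add_eq_zero_left hh0
end

section
/- Let F := (δ₁, δ₂) : E × E → E × E be the preconditioned residual map and r := (g, h) : E × E → E × E the unpreconditioned residual map. Assume F is differentiable at (p, s), g and h are differentiable at (p*, s), the preconditioning identities hold in a neighborhood of (p, s), and additionally δ₂(p, s) = 0 (so that s* = s). Then the exact preconditioned Jacobian identity coincides with the MSPIN approximation: for every (dp, ds) ∈ E × E, L(DF(p, s)(dp, ds)) = -Dr(p*, s)(dp, ds), where Dr(p*, s) is the Fréchet derivative of r at (p*, s) and L is the block lower-triangular operator L(a, b) := (∂_p g(p*, s)(a), ∂_p h(p*, s)(a) + ∂_s h(p*, s)(b)). In particular, if L is a bijective continuous linear map, then DF(p, s) = -L⁻¹ ∘ Dr(p*, s). -/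
/-- Let `F := (δ₁, δ₂)` be the preconditioned residual map and
`r := (g, h)` the unpreconditioned one. Assume `F` is differentiable at `(p, s)`, `g` and
`h` are differentiable at `(p*, s)` (where `p* := p + δ₁(p, s)`), the preconditioning
identities hold near `(p, s)`, and `δ₂(p, s) = 0` (so `s* = s`). Then for every
`(dp, ds)`, `L(DF(p, s)(dp, ds)) = -Dr(p*, s)(dp, ds)`, where
`L(a, b) := (∂_p g(p*, s)(a), ∂_p h(p*, s)(a) + ∂_s h(p*, s)(b))`; in particular, if `L` is
a bijective continuous linear map then `DF(p, s) = -L⁻¹ ∘ Dr(p*, s)`. -/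
theorem mspin_approximation_exact {E : Type*} [NormedAddCommGroup E] [NormedSpace ℝ E]
    [FiniteDimensional ℝ E]
    (g h δ₁ δ₂ : E × E → E) (p s : E)
    (pstar : E) (hpstar : pstar = p + δ₁ (p, s))
    (F r : E × E → E × E)
    (hF : ∀ x, F x = (δ₁ x, δ₂ x)) (hr : ∀ x, r x = (g x, h x))
    (hFdiff : DifferentiableAt ℝ F (p, s))
    (hg : DifferentiableAt ℝ g (pstar, s))
    (hh : DifferentiableAt ℝ h (pstar, s))
    (hidg : ∀ᶠ x in nhds (p, s), g (x.1 + δ₁ x, x.2) = 0)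
    (hidh : ∀ᶠ x in nhds (p, s), h (x.1 + δ₁ x, x.2 + δ₂ x) = 0)
    (hδ₂0 : δ₂ (p, s) = 0) :
    (∀ dp ds : E,
        fderiv ℝ (fun x => g (x, s)) pstar ((fderiv ℝ F (p, s) (dp, ds)).1)
          = -(fderiv ℝ r (pstar, s) (dp, ds)).1
      ∧ fderiv ℝ (fun x => h (x, s)) pstar ((fderiv ℝ F (p, s) (dp, ds)).1)
          + fderiv ℝ (fun y => h (pstar, y)) s ((fderiv ℝ F (p, s) (dp, ds)).2)
          = -(fderiv ℝ r (pstar, s) (dp, ds)).2)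
    ∧ ∀ L : (E × E) ≃L[ℝ] (E × E),
        (∀ a b : E, L (a, b) = (fderiv ℝ (fun x => g (x, s)) pstar a,
            fderiv ℝ (fun x => h (x, s)) pstar a
              + fderiv ℝ (fun y => h (pstar, y)) s b)) →
        fderiv ℝ F (p, s)
          = -((L.symm : (E × E) →L[ℝ] (E × E)).comp (fderiv ℝ r (pstar, s))) := by
  have hFeq : F = fun x => (δ₁ x, δ₂ x) := funext hF
  have hreq : r = fun x => (g x, h x) := funext hr
  subst hFeq hreq hpstar
  set p' := p + δ₁ (p, s) with hp'
  have hδ₁ : DifferentiableAt ℝ δ₁ (p, s) := hFdiff.fst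
  have hδ₂ : DifferentiableAt ℝ δ₂ (p, s) := hFdiff.snd
  set D₁ := fderiv ℝ δ₁ (p, s) with hD₁
  set D₂ := fderiv ℝ δ₂ (p, s) with hD₂
  set Dg := fderiv ℝ g (p', s) with hDg
  set Dh := fderiv ℝ h (p', s) with hDh
  have hFder : fderiv ℝ (fun x => (δ₁ x, δ₂ x)) (p, s) = D₁.prod D₂ :=
    hδ₁.fderiv_prodMk hδ₂
  have hrder : fderiv ℝ (fun x => (g x, h x)) (p', s) = Dg.prod Dh :=
    hg.fderiv_prodMk hh
  have hgp : fderiv ℝ (fun x => g (x, s)) p' = Dg.comp (ContinuousLinearMap.inl ℝ E E) :=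
    (hg.hasFDerivAt.comp p' (hasFDerivAt_prodMk_left p' s)).fderiv
  have hhp : fderiv ℝ (fun x => h (x, s)) p' = Dh.comp (ContinuousLinearMap.inl ℝ E E) :=
    (hh.hasFDerivAt.comp p' (hasFDerivAt_prodMk_left p' s)).fderiv
  have hhs : fderiv ℝ (fun y => h (p', y)) s = Dh.comp (ContinuousLinearMap.inr ℝ E E) :=
    (hh.hasFDerivAt.comp s (hasFDerivAt_prodMk_right p' s)).fderiv
  have hφ : HasFDerivAt (fun x : E × E => (x.1 + δ₁ x, x.2))
      (((ContinuousLinearMap.fst ℝ E E) + D₁).prod (ContinuousLinearMap.snd ℝ E E)) (p, s) :=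
    (hasFDerivAt_fst.add hδ₁.hasFDerivAt).prodMk hasFDerivAt_snd
  have hgchain : HasFDerivAt (fun x : E × E => g (x.1 + δ₁ x, x.2))
      (Dg.comp (((ContinuousLinearMap.fst ℝ E E) + D₁).prod (ContinuousLinearMap.snd ℝ E E)))
      (p, s) := hg.hasFDerivAt.comp (p, s) hφ
  have hgzero : Dg.comp (((ContinuousLinearMap.fst ℝ E E) + D₁).prod
      (ContinuousLinearMap.snd ℝ E E)) = 0 := by
    have hge : (fun x : E × E => g (x.1 + δ₁ x, x.2)) =ᶠ[nhds (p, s)]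
        (fun _ => (0 : E)) := hidg
    rw [← hgchain.fderiv, hge.fderiv_eq]
    simp
  have hψ : HasFDerivAt (fun x : E × E => (x.1 + δ₁ x, x.2 + δ₂ x))
      (((ContinuousLinearMap.fst ℝ E E) + D₁).prod ((ContinuousLinearMap.snd ℝ E E) + D₂))
      (p, s) :=
    (hasFDerivAt_fst.add hδ₁.hasFDerivAt).prodMk (hasFDerivAt_snd.add hδ₂.hasFDerivAt)
  have hh' : HasFDerivAt h Dh ((p : E) + δ₁ (p, s), s + δ₂ (p, s)) := by
    rw [hδ₂0, add_zero]; exact hh.hasFDerivAt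
  have hhchain : HasFDerivAt (fun x : E × E => h (x.1 + δ₁ x, x.2 + δ₂ x))
      (Dh.comp (((ContinuousLinearMap.fst ℝ E E) + D₁).prod
        ((ContinuousLinearMap.snd ℝ E E) + D₂))) (p, s) := hh'.comp (p, s) hψ
  have hhzero : Dh.comp (((ContinuousLinearMap.fst ℝ E E) + D₁).prod
      ((ContinuousLinearMap.snd ℝ E E) + D₂)) = 0 := by
    have hhe : (fun x : E × E => h (x.1 + δ₁ x, x.2 + δ₂ x)) =ᶠ[nhds (p, s)]
        (fun _ => (0 : E)) := hidh
    rw [← hhchain.fderiv, hhe.fderiv_eq]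
    simp
  have key : ∀ dp ds : E,
      fderiv ℝ (fun x => g (x, s)) p'
          ((fderiv ℝ (fun x => (δ₁ x, δ₂ x)) (p, s) (dp, ds)).1)
        = -(fderiv ℝ (fun x => (g x, h x)) (p', s) (dp, ds)).1
    ∧ fderiv ℝ (fun x => h (x, s)) p'
          ((fderiv ℝ (fun x => (δ₁ x, δ₂ x)) (p, s) (dp, ds)).1)
        + fderiv ℝ (fun y => h (p', y)) s
            ((fderiv ℝ (fun x => (δ₁ x, δ₂ x)) (p, s) (dp, ds)).2)
        = -(fderiv ℝ (fun x => (g x, h x)) (p', s) (dp, ds)).2 := by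
    intro dp ds
    have hg0 : Dg ((dp : E) + D₁ (dp, ds), ds) = 0 := by
      have := congrFun (congrArg DFunLike.coe hgzero) (dp, ds)
      simpa using this
    have hh0 : Dh ((dp : E) + D₁ (dp, ds), ds + D₂ (dp, ds)) = 0 := by
      have := congrFun (congrArg DFunLike.coe hhzero) (dp, ds)
      simpa using this
    have e1 : ((dp : E) + D₁ (dp, ds), ds) = (dp, ds) + (D₁ (dp, ds), (0 : E)) := by
      simp [Prod.ext_iff]
    have e2 : ((dp : E) + D₁ (dp, ds), ds + D₂ (dp, ds))
        = (dp, ds) + (D₁ (dp, ds), (0 : E)) + ((0 : E), D₂ (dp, ds)) := by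
      simp [Prod.ext_iff]
    rw [e1, map_add] at hg0
    rw [e2, map_add, map_add] at hh0
    constructor
    · rw [hgp, hFder, hrder]
      simp only [ContinuousLinearMap.comp_apply, ContinuousLinearMap.prod_apply,
        ContinuousLinearMap.inl_apply]
      exact eq_neg_of_add_eq_zero_right hg0
    · rw [hhp, hhs, hFder, hrder]
      simp only [ContinuousLinearMap.comp_apply, ContinuousLinearMap.prod_apply,
        ContinuousLinearMap.inl_apply, ContinuousLinearMap.inr_apply]
      have := eq_neg_of_add_eq_zero_right (by rw [← add_assoc]; exact hh0 :
        Dh (dp, ds) + (Dh (D₁ (dp, ds), (0 : E)) + Dh ((0 : E), D₂ (dp, ds))) = 0)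
      exact this
  refine ⟨key, ?_⟩
  intro L hL
  refine ContinuousLinearMap.ext fun v => ?_
  have hv : L (fderiv ℝ (fun x => (δ₁ x, δ₂ x)) (p, s) v)
      = -(fderiv ℝ (fun x => (g x, h x)) (p', s) v) := by
    obtain ⟨k1, k2⟩ := key v.1 v.2
    have : (fderiv ℝ (fun x => (δ₁ x, δ₂ x)) (p, s) v)
        = ((fderiv ℝ (fun x => (δ₁ x, δ₂ x)) (p, s) v).1,
          (fderiv ℝ (fun x => (δ₁ x, δ₂ x)) (p, s) v).2) := rfl
    rw [this, hL]
    have hv' : (v.1, v.2) = v := rfl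
    rw [hv'] at k1 k2
    rw [k1, k2]
    exact (Prod.ext_iff.mpr ⟨rfl, rfl⟩).trans (by simp [Prod.ext_iff])
  calc fderiv ℝ (fun x => (δ₁ x, δ₂ x)) (p, s) v
      = L.symm (L (fderiv ℝ (fun x => (δ₁ x, δ₂ x)) (p, s) v)) := (L.symm_apply_apply _).symm
    _ = L.symm (-(fderiv ℝ (fun x => (g x, h x)) (p', s) v)) := by rw [hv]
    _ = _ := by simp
end
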